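/- Let n1, n2 be positive integers, let μ1 ∈ ℝ^{n1} have strictly positive entries, and let γ* ∈ ℝ^{n1×n2} have strictly positive entries with A1γ* = μ1; set F(ξ) = KL(γ*, ξ). Fix θ0 ∈ [1, 2) and δ > 0, and define Θ*(u) = sup{ ω ∈ [1, 2] : φ_ω(min_i u_i) ≥ 0 } and Θ(u) = min(max(1, Θ*(u) − δ), θ0) for entrywise positive vectors u ∈ ℝ^{n1}. Then the function θ1(γ) = Θ((A1γ) ⊘ μ1) is continuous on the set of entrywise positive n1×n2 matrices, and satisfies F(P^{θ1(γ)}_{C1}(γ)) ≤ F(γ) for every entrywise positive γ, with strict inequality whenever A1γ ≠ μ1. -/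

import Mathlib

open scoped BigOperators

/-- Kullback–Leibler divergence between two matrices with positive entries. -/
noncomputable def KL {n1 n2 : ℕ} (γ ξ : Matrix (Fin n1) (Fin n2) ℝ) : ℝ :=
  (∑ i, ∑ j, γ i j * (Real.log (γ i j / ξ i j) - 1)) + ∑ i, ∑ j, ξ i j

/-- The ω-overrelaxed projection onto `C1 = {γ : A1 γ = μ1}`. -/
noncomputable def P1 {n1 n2 : ℕ} (μ1 : Fin n1 → ℝ) (ω : ℝ)
    (γ : Matrix (Fin n1) (Fin n2) ℝ) : Matrix (Fin n1) (Fin n2) ℝ :=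
  Matrix.of fun i j => γ i j * (μ1 i / ∑ j', γ i j') ^ ω

/-- `φ_ω(x) = x(1 - x^{-ω}) - ω log x`. -/
noncomputable def phi (ω x : ℝ) : ℝ := x * (1 - x ^ (-ω)) - ω * Real.log x

/-- `Θ*(u) = sup { ω ∈ [1,2] : φ_ω(min_i u_i) ≥ 0 }`. -/
noncomputable def ThetaStar {n : ℕ} (u : Fin n → ℝ) : ℝ :=
  sSup {ω : ℝ | ω ∈ Set.Icc (1 : ℝ) 2 ∧ 0 ≤ phi ω (sInf (Set.range u))}

/-- `Θ(u) = min(max(1, Θ*(u) − δ), θ0)`. -/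
noncomputable def Theta {n : ℕ} (θ0 δ : ℝ) (u : Fin n → ℝ) : ℝ :=
  min (max 1 (ThetaStar u - δ)) θ0

section AuxLemmas
lemma phi_pos_form {x : ℝ} (hx : 0 < x) (ω : ℝ) :
    phi ω x = x - x ^ (1 - ω) - ω * Real.log x := by
  have : x ^ (1 - ω) = x * x ^ (-ω) := by
    rw [show (1 : ℝ) - ω = 1 + (-ω) by ring, Real.rpow_add hx, Real.rpow_one]
  rw [phi, this]; ring

lemma phi_one_eq {x : ℝ} (hx : 0 < x) : phi 1 x = x - 1 - Real.log x := by
  rw [phi_pos_form hx, sub_self, Real.rpow_zero, one_mul]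

lemma phi_one_nonneg {x : ℝ} (hx : 0 < x) : 0 ≤ phi 1 x := by
  rw [phi_one_eq hx]
  have := Real.log_le_sub_one_of_pos hx
  linarith

lemma phi_one_pos {x : ℝ} (hx : 0 < x) (hx1 : x ≠ 1) : 0 < phi 1 x := by
  rw [phi_one_eq hx]
  have := Real.log_lt_sub_one_of_pos hx hx1
  linarith

lemma phi_at_one (ω : ℝ) : phi ω 1 = 0 := by
  simp [phi]

lemma hasDerivAt_phi_omega {x : ℝ} (hx : 0 < x) (ω : ℝ) :
    HasDerivAt (fun ω => phi ω x) (Real.log x * (x ^ (1 - ω) - 1)) ω := by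
  have hfun : (fun ω => phi ω x) = fun ω => x - Real.exp (Real.log x * (1 - ω)) - ω * Real.log x := by
    funext ω
    rw [phi_pos_form hx, Real.rpow_def_of_pos hx]
  rw [hfun]
  have h1 : HasDerivAt (fun ω : ℝ => Real.log x * (1 - ω)) (Real.log x * (-1)) ω :=
    ((hasDerivAt_id ω).const_sub 1).const_mul (Real.log x)
  have h2 : HasDerivAt (fun ω : ℝ => Real.exp (Real.log x * (1 - ω)))
      (Real.exp (Real.log x * (1 - ω)) * (Real.log x * (-1))) ω := h1.exp
  have h3 : HasDerivAt (fun ω : ℝ => ω * Real.log x) (Real.log x) ω := by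
    simpa using (hasDerivAt_id ω).mul_const (Real.log x)
  have := ((h2.const_sub x).sub h3)
  refine this.congr_deriv ?_
  rw [← Real.rpow_def_of_pos hx]
  ring

lemma phi_antitoneOn {x : ℝ} (hx : 0 < x) :
    AntitoneOn (fun ω => phi ω x) (Set.Ici 1) := by
  have hint : interior (Set.Ici (1:ℝ)) = Set.Ioi 1 := interior_Ici
  apply antitoneOn_of_deriv_nonpos (convex_Ici 1)
  · exact fun ω _ => ((hasDerivAt_phi_omega hx ω).continuousAt).continuousWithinAt
  · intro ω hω
    exact ((hasDerivAt_phi_omega hx ω).differentiableAt).differentiableWithinAt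
  · intro ω hω
    rw [hint] at hω
    rw [(hasDerivAt_phi_omega hx ω).deriv]
    rcases le_or_gt 1 x with h1 | h1
    · apply mul_nonpos_of_nonneg_of_nonpos (Real.log_nonneg h1)
      have : x ^ (1 - ω) ≤ 1 :=
        Real.rpow_le_one_of_one_le_of_nonpos h1 (by linarith [hω.out])
      linarith
    · apply mul_nonpos_of_nonpos_of_nonneg (Real.log_nonpos hx.le h1.le)
      have : 1 ≤ x ^ (1 - ω) :=
        Real.one_le_rpow_of_pos_of_le_one_of_nonpos hx h1.le (by linarith [hω.out])
      linarith

lemma phi_strictAntiOn {x : ℝ} (hx : 0 < x) (hx1 : x ≠ 1) :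
    StrictAntiOn (fun ω => phi ω x) (Set.Ici 1) := by
  have hint : interior (Set.Ici (1:ℝ)) = Set.Ioi 1 := interior_Ici
  apply strictAntiOn_of_deriv_neg (convex_Ici 1)
  · exact continuousOn_of_forall_continuousAt fun ω _ => (hasDerivAt_phi_omega hx ω).continuousAt
  · intro ω hω
    rw [hint] at hω
    rw [(hasDerivAt_phi_omega hx ω).deriv]
    rcases lt_or_gt_of_ne hx1 with h1 | h1
    · apply mul_neg_of_neg_of_pos (Real.log_neg hx h1)
      have : 1 < x ^ (1 - ω) :=
        Real.one_lt_rpow_of_pos_of_lt_one_of_neg hx h1 (by linarith [hω.out])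
      linarith
    · apply mul_neg_of_pos_of_neg (Real.log_pos h1)
      have : x ^ (1 - ω) < 1 :=
        Real.rpow_lt_one_of_one_lt_of_neg h1 (by linarith [hω.out])
      linarith

lemma phi_two_nonneg {x : ℝ} (hx : 1 ≤ x) : 0 ≤ phi 2 x := by
  have hx0 : (0:ℝ) < x := lt_of_lt_of_le one_pos hx
  set f : ℝ → ℝ := fun y => y - y⁻¹ - 2 * Real.log y with hf
  have hderiv : ∀ y : ℝ, 0 < y → HasDerivAt f (1 + (y^2)⁻¹ - 2 * y⁻¹) y := by
    intro y hy
    have h1 : HasDerivAt (fun z : ℝ => z⁻¹) (-(y^2)⁻¹) y := hasDerivAt_inv hy.ne'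
    have h2 : HasDerivAt Real.log y⁻¹ y := Real.hasDerivAt_log hy.ne'
    have := ((hasDerivAt_id y).sub h1).sub (h2.const_mul 2)
    refine this.congr_deriv ?_; ring
  have hmono : MonotoneOn f (Set.Ici 1) := by
    apply monotoneOn_of_deriv_nonneg (convex_Ici 1)
    · exact continuousOn_of_forall_continuousAt fun y hy =>
        (hderiv y (lt_of_lt_of_le one_pos hy.out)).continuousAt
    · intro y hy
      rw [interior_Ici] at hy
      exact (hderiv y (lt_trans one_pos hy.out)).differentiableAt.differentiableWithinAt
    · intro y hy
      rw [interior_Ici] at hy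
      have hy1 : (1:ℝ) < y := hy.out
      have hy0 : (0:ℝ) < y := lt_trans one_pos hy1
      rw [(hderiv y hy0).deriv]
      have h : 1 + (y^2)⁻¹ - 2 * y⁻¹ = (1 - y⁻¹)^2 := by
        field_simp; ring
      rw [h]; positivity
  have h0 : f 1 = 0 := by simp [hf]
  have := hmono (Set.mem_Ici.2 le_rfl) (Set.mem_Ici.2 hx) hx
  rw [h0] at this
  calc (0:ℝ) ≤ f x := this
    _ = phi 2 x := by
        rw [phi_pos_form hx0, hf]
        have : x ^ ((1:ℝ) - 2) = x⁻¹ := by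
          norm_num
          exact Real.rpow_neg_one x
        rw [this]

noncomputable def Dphi (θ x : ℝ) : ℝ := 1 + (θ - 1) * x ^ (-θ) - θ * x⁻¹

lemma hasDerivAt_phi_x {x : ℝ} (hx : 0 < x) (θ : ℝ) :
    HasDerivAt (fun y => phi θ y) (Dphi θ x) x := by
  have hev : (fun y => phi θ y) =ᶠ[nhds x] fun y => y - y ^ (1 - θ) - θ * Real.log y := by
    filter_upwards [IsOpen.mem_nhds isOpen_Ioi hx] with y hy
    exact phi_pos_form hy θ
  have h1 : HasDerivAt (fun y : ℝ => y ^ ((1:ℝ) - θ)) ((1 - θ) * x ^ ((1:ℝ) - θ - 1)) x :=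
    Real.hasDerivAt_rpow_const (Or.inl hx.ne')
  have h2 : HasDerivAt Real.log x⁻¹ x := Real.hasDerivAt_log hx.ne'
  have h3 := ((hasDerivAt_id x).sub h1).sub (h2.const_mul θ)
  apply HasDerivAt.congr_of_eventuallyEq _ hev
  refine h3.congr_deriv ?_
  rw [Dphi, show (1:ℝ) - θ - 1 = -θ by ring]
  ring

lemma hasDerivAt_Dphi {x : ℝ} (hx : 0 < x) (θ : ℝ) :
    HasDerivAt (fun y => Dphi θ y)
      ((θ - 1) * (-θ * x ^ (-θ - 1)) + θ * (x ^ 2)⁻¹) x := by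
  have h1 : HasDerivAt (fun y : ℝ => y ^ (-θ)) (-θ * x ^ (-θ - 1)) x :=
    Real.hasDerivAt_rpow_const (Or.inl hx.ne')
  have h2 : HasDerivAt (fun y : ℝ => y⁻¹) (-(x ^ 2)⁻¹) x := hasDerivAt_inv hx.ne'
  have := ((h1.const_mul (θ - 1)).const_add 1).sub (h2.const_mul θ)
  refine this.congr_deriv ?_
  ring

noncomputable def cth (θ : ℝ) : ℝ := (θ - 1) ^ ((θ - 1)⁻¹)

lemma cth_pos {θ : ℝ} (hθ1 : 1 < θ) : 0 < cth θ := Real.rpow_pos_of_pos (by linarith) _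

lemma cth_lt_one {θ : ℝ} (hθ1 : 1 < θ) (hθ2 : θ < 2) : cth θ < 1 :=
  Real.rpow_lt_one (by linarith) (by linarith) (by rw [inv_pos]; linarith)

lemma cth_rpow {θ : ℝ} (hθ1 : 1 < θ) : (cth θ) ^ (θ - 1) = θ - 1 := by
  rw [cth, ← Real.rpow_mul (by linarith), inv_mul_cancel₀ (by intro h; linarith),
    Real.rpow_one]

lemma rpow_aux {x : ℝ} (hx0 : 0 < x) {θ : ℝ} :
    x ^ (-θ - 1) * x ^ (θ - 1) = (x ^ 2)⁻¹ := by
  rw [← Real.rpow_add hx0, show -θ - 1 + (θ - 1) = ((-2 : ℤ) : ℝ) by push_cast; ring,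
    Real.rpow_intCast]
  rw [zpow_neg]
  norm_cast

lemma Dphi_deriv_pos {θ : ℝ} (hθ1 : 1 < θ) {x : ℝ} (hc : cth θ < x) (hx1 : x < 1) :
    0 < (θ - 1) * (-θ * x ^ (-θ - 1)) + θ * (x ^ 2)⁻¹ := by
  have hx0 : 0 < x := lt_trans (cth_pos hθ1) hc
  have hθ0 : (0:ℝ) < θ := by linarith
  have key : (θ - 1) * x ^ (-θ - 1) < (x ^ 2)⁻¹ := by
    rw [← rpow_aux hx0 (θ := θ)]
    have h2 : θ - 1 < x ^ (θ - 1) := by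
      calc θ - 1 = (cth θ) ^ (θ - 1) := (cth_rpow hθ1).symm
        _ < x ^ (θ - 1) := Real.rpow_lt_rpow (cth_pos hθ1).le hc (by linarith)
    calc (θ - 1) * x ^ (-θ - 1) < x ^ (θ - 1) * x ^ (-θ - 1) :=
          mul_lt_mul_of_pos_right h2 (Real.rpow_pos_of_pos hx0 _)
      _ = x ^ (-θ - 1) * x ^ (θ - 1) := by ring
  nlinarith [Real.rpow_pos_of_pos hx0 (-θ - 1)]

lemma Dphi_deriv_nonpos {θ : ℝ} (hθ1 : 1 < θ) {x : ℝ} (hx0 : 0 < x) (hc : x ≤ cth θ) :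
    (θ - 1) * (-θ * x ^ (-θ - 1)) + θ * (x ^ 2)⁻¹ ≤ 0 := by
  have hθ0 : (0:ℝ) < θ := by linarith
  have key : (x ^ 2)⁻¹ ≤ (θ - 1) * x ^ (-θ - 1) := by
    rw [← rpow_aux hx0 (θ := θ)]
    have h2 : x ^ (θ - 1) ≤ θ - 1 := by
      calc x ^ (θ - 1) ≤ (cth θ) ^ (θ - 1) :=
            Real.rpow_le_rpow hx0.le hc (by linarith)
        _ = θ - 1 := cth_rpow hθ1
    calc x ^ (-θ - 1) * x ^ (θ - 1) ≤ x ^ (-θ - 1) * (θ - 1) :=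
          mul_le_mul_of_nonneg_left h2 (Real.rpow_pos_of_pos hx0 _).le
      _ = (θ - 1) * x ^ (-θ - 1) := by ring
  nlinarith [Real.rpow_pos_of_pos hx0 (-θ - 1)]

lemma Dphi_strictMono {θ : ℝ} (hθ1 : 1 < θ) :
    StrictMonoOn (Dphi θ) (Set.Icc (cth θ) 1) := by
  apply strictMonoOn_of_deriv_pos (convex_Icc _ _)
  · exact continuousOn_of_forall_continuousAt fun y hy =>
      (hasDerivAt_Dphi (lt_of_lt_of_le (cth_pos hθ1) hy.1) θ).continuousAt
  · intro y hy
    rw [interior_Icc] at hy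
    rw [(hasDerivAt_Dphi (lt_trans (cth_pos hθ1) hy.1) θ).deriv]
    exact Dphi_deriv_pos hθ1 hy.1 hy.2

lemma Dphi_at_one {θ : ℝ} : Dphi θ 1 = 0 := by simp [Dphi]

lemma Dphi_neg {θ : ℝ} (hθ1 : 1 < θ) {x : ℝ} (hc : cth θ ≤ x) (hx1 : x < 1) :
    Dphi θ x < 0 := by
  have := Dphi_strictMono hθ1 (Set.mem_Icc.2 ⟨hc, hx1.le⟩)
    (Set.mem_Icc.2 ⟨le_trans hc hx1.le, le_rfl⟩) hx1
  rwa [Dphi_at_one] at this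

lemma phi_pos_on_c_one {θ : ℝ} (hθ1 : 1 < θ) {x : ℝ} (hc : cth θ ≤ x) (hx1 : x < 1) :
    0 < phi θ x := by
  have hanti : StrictAntiOn (fun y => phi θ y) (Set.Icc (cth θ) 1) := by
    apply strictAntiOn_of_deriv_neg (convex_Icc _ _)
    · exact continuousOn_of_forall_continuousAt fun y hy =>
        (hasDerivAt_phi_x (lt_of_lt_of_le (cth_pos hθ1) hy.1) θ).continuousAt
    · intro y hy
      rw [interior_Icc] at hy
      rw [(hasDerivAt_phi_x (lt_trans (cth_pos hθ1) hy.1) θ).deriv]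
      exact Dphi_neg hθ1 hy.1.le hy.2
  have := hanti (Set.mem_Icc.2 ⟨hc, hx1.le⟩)
    (Set.mem_Icc.2 ⟨le_trans hc hx1.le, le_rfl⟩) hx1
  simpa [phi_at_one] using this

lemma phi_concave {θ : ℝ} (hθ1 : 1 < θ) :
    ConcaveOn ℝ (Set.Ioc 0 (cth θ)) (fun y => phi θ y) := by
  have hint : interior (Set.Ioc (0:ℝ) (cth θ)) = Set.Ioo 0 (cth θ) := interior_Ioc
  apply AntitoneOn.concaveOn_of_deriv (convex_Ioc _ _)
  · exact continuousOn_of_forall_continuousAt fun y hy =>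
      (hasDerivAt_phi_x hy.1 θ).continuousAt
  · intro y hy
    rw [hint] at hy
    exact (hasDerivAt_phi_x hy.1 θ).differentiableAt.differentiableWithinAt
  · rw [hint]
    have heq : ∀ y ∈ Set.Ioo (0:ℝ) (cth θ), deriv (fun y => phi θ y) y = Dphi θ y :=
      fun y hy => (hasDerivAt_phi_x hy.1 θ).deriv
    have hD : AntitoneOn (Dphi θ) (Set.Ioo 0 (cth θ)) := by
      apply antitoneOn_of_deriv_nonpos (convex_Ioo _ _)
      · exact continuousOn_of_forall_continuousAt fun y hy =>
          (hasDerivAt_Dphi hy.1 θ).continuousAt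
      · intro y hy
        rw [interior_Ioo] at hy
        exact (hasDerivAt_Dphi hy.1 θ).differentiableAt.differentiableWithinAt
      · intro y hy
        rw [interior_Ioo] at hy
        rw [(hasDerivAt_Dphi hy.1 θ).deriv]
        exact Dphi_deriv_nonpos hθ1 hy.1 hy.2.le
    intro a ha b hb hab
    rw [heq a ha, heq b hb]
    exact hD ha hb hab

/-- ω-comparison: φ_θ(x) ≥ φ_2(x) ≥ 0 for x ≥ 1, 1 ≤ θ ≤ 2. -/
lemma phi_nonneg_of_one_le_x {θ x : ℝ} (hθ1 : 1 ≤ θ) (hθ2 : θ ≤ 2) (hx : 1 ≤ x) :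
    0 ≤ phi θ x :=
  le_trans (phi_two_nonneg hx)
    (phi_antitoneOn (lt_of_lt_of_le one_pos hx) (Set.mem_Ici.2 hθ1)
      (Set.mem_Ici.2 (by norm_num)) hθ2)

lemma phi_pos_of_one_lt_x {θ x : ℝ} (hθ1 : 1 ≤ θ) (hθ2 : θ < 2) (hx : 1 < x) :
    0 < phi θ x :=
  lt_of_le_of_lt (phi_two_nonneg hx.le)
    (phi_strictAntiOn (lt_trans one_pos hx) (ne_of_gt hx) (Set.mem_Ici.2 hθ1)
      (Set.mem_Ici.2 (by norm_num)) hθ2)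

/-- L6 nonstrict. -/
lemma phi_nonneg_between {θ m x : ℝ} (hθ1 : 1 ≤ θ) (hθ2 : θ < 2)
    (hm : 0 < m) (hmx : m ≤ x) (hx1 : x ≤ 1) (hphim : 0 ≤ phi θ m) :
    0 ≤ phi θ x := by
  have hx0 : 0 < x := lt_of_lt_of_le hm hmx
  rcases eq_or_lt_of_le hθ1 with h | h
  · exact h ▸ phi_one_nonneg hx0
  rcases le_or_gt (cth θ) x with hc | hc
  · rcases eq_or_lt_of_le hx1 with h1 | h1
    · rw [h1, phi_at_one]
    · exact (phi_pos_on_c_one h hc h1).le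
  · have hcx : m ≤ cth θ := le_of_lt (lt_of_le_of_lt hmx hc)
    have hmin := (phi_concave h).min_le_of_mem_Icc
      (Set.mem_Ioc.2 ⟨hm, hcx⟩) (Set.mem_Ioc.2 ⟨cth_pos h, le_rfl⟩)
      (Set.mem_Icc.2 ⟨hmx, hc.le⟩)
    have hc1 : 0 < phi θ (cth θ) := phi_pos_on_c_one h le_rfl (cth_lt_one h hθ2)
    calc (0:ℝ) ≤ min (phi θ m) (phi θ (cth θ)) := le_min hphim hc1.le
      _ ≤ phi θ x := hmin

/-- L6 strict. -/
lemma phi_pos_between {θ m x : ℝ} (hθ1 : 1 ≤ θ) (hθ2 : θ < 2)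
    (hm : 0 < m) (hmx : m ≤ x) (hx1 : x < 1) (hphim : 0 < phi θ m) :
    0 < phi θ x := by
  have hx0 : 0 < x := lt_of_lt_of_le hm hmx
  rcases eq_or_lt_of_le hθ1 with h | h
  · exact h ▸ phi_one_pos hx0 (ne_of_lt hx1)
  rcases le_or_gt (cth θ) x with hc | hc
  · exact phi_pos_on_c_one h hc hx1
  · have hcx : m ≤ cth θ := le_of_lt (lt_of_le_of_lt hmx hc)
    have hmin := (phi_concave h).min_le_of_mem_Icc
      (Set.mem_Ioc.2 ⟨hm, hcx⟩) (Set.mem_Ioc.2 ⟨cth_pos h, le_rfl⟩)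
      (Set.mem_Icc.2 ⟨hmx, hc.le⟩)
    have hc1 : 0 < phi θ (cth θ) := phi_pos_on_c_one h le_rfl (cth_lt_one h hθ2)
    calc (0:ℝ) < min (phi θ m) (phi θ (cth θ)) := lt_min hphim hc1
      _ ≤ phi θ x := hmin

def Sset (m : ℝ) : Set ℝ := {ω : ℝ | ω ∈ Set.Icc (1 : ℝ) 2 ∧ 0 ≤ phi ω m}

noncomputable def Gfun (m : ℝ) : ℝ := sSup (Sset m)

lemma one_mem_Sset {m : ℝ} (hm : 0 < m) : 1 ∈ Sset m :=
  ⟨Set.mem_Icc.2 ⟨le_rfl, by norm_num⟩, phi_one_nonneg hm⟩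

lemma bddAbove_Sset {m : ℝ} : BddAbove (Sset m) := ⟨2, fun ω h => h.1.2⟩

lemma one_le_Gfun {m : ℝ} (hm : 0 < m) : 1 ≤ Gfun m :=
  le_csSup bddAbove_Sset (one_mem_Sset hm)

lemma Gfun_le_two {m : ℝ} (hm : 0 < m) : Gfun m ≤ 2 :=
  csSup_le ⟨1, one_mem_Sset hm⟩ fun ω h => h.1.2

lemma Gfun_eq_two {m : ℝ} (hm : 1 ≤ m) : Gfun m = 2 := by
  have h2 : (2:ℝ) ∈ Sset m := ⟨Set.mem_Icc.2 ⟨by norm_num, le_rfl⟩, phi_two_nonneg hm⟩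
  exact le_antisymm (Gfun_le_two (lt_of_lt_of_le one_pos hm))
    (le_csSup bddAbove_Sset h2)

lemma phi_nonneg_of_lt_Gfun {m θ : ℝ} (hm : 0 < m) (hθ1 : 1 ≤ θ) (hθG : θ < Gfun m) :
    0 ≤ phi θ m := by
  obtain ⟨ω, hωS, hθω⟩ := exists_lt_of_lt_csSup ⟨1, one_mem_Sset hm⟩ hθG
  exact le_trans hωS.2
    (phi_antitoneOn hm (Set.mem_Ici.2 hθ1) (Set.mem_Ici.2 (le_trans hθ1 hθω.le)) hθω.le)

lemma phi_pos_of_lt_Gfun {m θ : ℝ} (hm : 0 < m) (hm1 : m ≠ 1) (hθ1 : 1 ≤ θ)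
    (hθG : θ < Gfun m) : 0 < phi θ m := by
  obtain ⟨ω, hωS, hθω⟩ := exists_lt_of_lt_csSup ⟨1, one_mem_Sset hm⟩ hθG
  exact lt_of_le_of_lt hωS.2
    (phi_strictAntiOn hm hm1 (Set.mem_Ici.2 hθ1) (Set.mem_Ici.2 (le_trans hθ1 hθω.le)) hθω)

lemma phi_continuousAt_x {θ m0 : ℝ} (hm0 : 0 < m0) :
    ContinuousAt (fun m => phi θ m) m0 := by
  apply ContinuousAt.sub
  · exact continuousAt_id.mul
      (continuousAt_const.sub (Real.continuousAt_rpow_const m0 (-θ) (Or.inl hm0.ne')))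
  · exact continuousAt_const.mul (Real.continuousAt_log hm0.ne')

lemma Gfun_continuousAt {m0 : ℝ} (hm0 : 0 < m0) : ContinuousAt Gfun m0 := by
  rw [Metric.continuousAt_iff]
  intro ε hε
  have usc : ∃ η > 0, ∀ m, 0 < m → |m - m0| < η → Gfun m < Gfun m0 + ε := by
    rcases le_or_gt (Gfun m0 + ε / 2) 2 with h2 | h2
    · obtain ⟨θ', hθ'def⟩ : ∃ t, t = Gfun m0 + ε / 2 := ⟨_, rfl⟩
      rw [← hθ'def] at h2
      have hθ'1 : 1 ≤ θ' := le_trans (one_le_Gfun hm0) (by linarith)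
      have hneg : phi θ' m0 < 0 := by
        by_contra h
        push_neg at h
        have hmem : θ' ∈ Sset m0 := ⟨Set.mem_Icc.2 ⟨hθ'1, h2⟩, h⟩
        have hle : θ' ≤ Gfun m0 := le_csSup bddAbove_Sset hmem
        linarith
      have hev : ∀ᶠ m in nhds m0, phi θ' m < 0 :=
        (phi_continuousAt_x hm0).eventually_lt_const hneg
      rw [Metric.eventually_nhds_iff] at hev
      obtain ⟨η, hη, hball⟩ := hev
      refine ⟨η, hη, fun m hm hdist => ?_⟩
      have hφ : phi θ' m < 0 := hball (by rwa [Real.dist_eq])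
      have hGle : Gfun m ≤ θ' := by
        by_contra h
        push_neg at h
        obtain ⟨ω, hωS, hθω⟩ := exists_lt_of_lt_csSup ⟨1, one_mem_Sset hm⟩ h
        have := le_trans hωS.2
          (phi_antitoneOn hm (Set.mem_Ici.2 hθ'1)
            (Set.mem_Ici.2 (le_trans hθ'1 hθω.le)) hθω.le)
        linarith
      calc Gfun m ≤ θ' := hGle
        _ < Gfun m0 + ε := by linarith
    · exact ⟨1, one_pos, fun m hm _ => lt_of_le_of_lt (Gfun_le_two hm) (by linarith)⟩
  have lsc : ∃ η > 0, ∀ m, 0 < m → |m - m0| < η → Gfun m0 - ε < Gfun m := by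
    rcases lt_or_ge (Gfun m0 - ε) 1 with h1 | h1
    · exact ⟨1, one_pos, fun m hm _ => lt_of_lt_of_le h1 (one_le_Gfun hm)⟩
    rcases lt_trichotomy m0 1 with hlt | heq | hgt
    · -- m0 < 1
      obtain ⟨θ, hθdef⟩ : ∃ t, t = max (Gfun m0 - ε / 2) ((1 + Gfun m0) / 2) := ⟨_, rfl⟩
      have hG1 : 1 + ε ≤ Gfun m0 := by linarith
      have hθ1 : 1 < θ := by
        rw [hθdef]; exact lt_of_lt_of_le (by linarith) (le_max_right _ _)
      have hθG : θ < Gfun m0 := by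
        rw [hθdef]; exact max_lt (by linarith) (by linarith)
      have hθ2 : θ ≤ 2 := le_trans hθG.le (Gfun_le_two hm0)
      obtain ⟨ω, hωS, hθω⟩ := exists_lt_of_lt_csSup ⟨1, one_mem_Sset hm0⟩ hθG
      have hpos : 0 < phi θ m0 :=
        lt_of_le_of_lt hωS.2
          (phi_strictAntiOn hm0 (ne_of_lt hlt) (Set.mem_Ici.2 hθ1.le)
            (Set.mem_Ici.2 (le_trans hθ1.le hθω.le)) hθω)
      have hev : ∀ᶠ m in nhds m0, 0 < phi θ m :=
        (phi_continuousAt_x hm0).eventually_const_lt hpos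
      rw [Metric.eventually_nhds_iff] at hev
      obtain ⟨η, hη, hball⟩ := hev
      refine ⟨η, hη, fun m hm hdist => ?_⟩
      have hφ : 0 < phi θ m := hball (by rwa [Real.dist_eq])
      have hmem : θ ∈ Sset m := ⟨Set.mem_Icc.2 ⟨hθ1.le, hθ2⟩, hφ.le⟩
      calc Gfun m0 - ε < θ := by
            rw [hθdef]; exact lt_of_lt_of_le (by linarith) (le_max_left _ _)
        _ ≤ Gfun m := le_csSup bddAbove_Sset hmem
    · -- m0 = 1
      subst heq
      rw [Gfun_eq_two le_rfl] at h1 ⊢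
      have hε1 : ε ≤ 1 := by linarith
      obtain ⟨θ, hθdef⟩ : ∃ t, t = 2 - ε / 2 := ⟨_, rfl⟩
      have hθ1 : 1 < θ := by rw [hθdef]; linarith
      have hθ2 : θ < 2 := by rw [hθdef]; linarith
      refine ⟨1 - cth θ, by linarith [cth_lt_one hθ1 hθ2], fun m hm hdist => ?_⟩
      rcases le_or_gt 1 m with hm1 | hm1
      · rw [Gfun_eq_two hm1]; linarith
      · have hcm : cth θ ≤ m := by
          have := abs_lt.1 hdist
          linarith [this.1]
        have hφ : 0 < phi θ m := phi_pos_on_c_one hθ1 hcm hm1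
        have hmem : θ ∈ Sset m := ⟨Set.mem_Icc.2 ⟨hθ1.le, hθ2.le⟩, hφ.le⟩
        calc 2 - ε < θ := by rw [hθdef]; linarith
          _ ≤ Gfun m := le_csSup bddAbove_Sset hmem
    · -- 1 < m0
      refine ⟨m0 - 1, by linarith, fun m hm hdist => ?_⟩
      have hm1 : 1 ≤ m := by
        have := abs_lt.1 hdist
        linarith [this.1]
      rw [Gfun_eq_two hm1]
      linarith [Gfun_le_two hm0]
  obtain ⟨η1, hη1, hu⟩ := usc
  obtain ⟨η2, hη2, hl⟩ := lsc
  refine ⟨min (min η1 η2) (m0 / 2), by positivity, fun {m} hdist => ?_⟩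
  rw [Real.dist_eq] at hdist ⊢
  have hm0' : |m - m0| < m0 / 2 := lt_of_lt_of_le hdist (min_le_right _ _)
  have hm : 0 < m := by
    have := abs_lt.1 hm0'
    linarith [this.1]
  have h1 := hu m hm (lt_of_lt_of_le hdist (le_trans (min_le_left _ _) (min_le_left _ _)))
  have h2 := hl m hm (lt_of_lt_of_le hdist (le_trans (min_le_left _ _) (min_le_right _ _)))
  rw [abs_lt]
  constructor <;> linarith

lemma KL_P1_eq {n1 n2 : ℕ} (hn2 : 0 < n2) (μ1 : Fin n1 → ℝ) (hμ1 : ∀ i, 0 < μ1 i)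
    (gstar γ : Matrix (Fin n1) (Fin n2) ℝ) (hgs : ∀ i j, 0 < gstar i j)
    (hmarg : ∀ i, ∑ j, gstar i j = μ1 i) (hγ : ∀ i j, 0 < γ i j) (θ : ℝ) :
    KL gstar (P1 μ1 θ γ) =
      KL gstar γ - ∑ i, μ1 i * phi θ ((∑ j, γ i j) / μ1 i) := by
  have hne : (Finset.univ : Finset (Fin n2)).Nonempty := by
    simp [Finset.univ_nonempty_iff, Fin.pos_iff_nonempty.mp hn2]
  have hs : ∀ i, 0 < ∑ j, γ i j := fun i => Finset.sum_pos (fun j _ => hγ i j) hne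
  have row : ∀ i,
      ((∑ j, gstar i j * (Real.log (gstar i j / P1 μ1 θ γ i j) - 1)) + ∑ j, P1 μ1 θ γ i j)
      = ((∑ j, gstar i j * (Real.log (gstar i j / γ i j) - 1)) + ∑ j, γ i j)
        - μ1 i * phi θ ((∑ j, γ i j) / μ1 i) := by
    intro i
    obtain ⟨s, hsdef⟩ : ∃ t, t = ∑ j, γ i j := ⟨_, rfl⟩
    obtain ⟨u, hudef⟩ : ∃ t, t = s / μ1 i := ⟨_, rfl⟩
    have hs0 : 0 < s := hsdef ▸ hs i
    have hu0 : 0 < u := by rw [hudef]; exact div_pos hs0 (hμ1 i)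
    have hc : μ1 i / s = u⁻¹ := by rw [hudef]; field_simp
    have hcpow : (μ1 i / s) ^ θ = u ^ (-θ) := by
      rw [hc, Real.inv_rpow hu0.le, ← Real.rpow_neg hu0.le]
    have hupos : (0:ℝ) < u ^ (-θ) := Real.rpow_pos_of_pos hu0 _
    have hP : ∀ j, P1 μ1 θ γ i j = γ i j * u ^ (-θ) := fun j => by
      simp only [P1, Matrix.of_apply]
      rw [← hsdef, hcpow]
    have hlog : ∀ j, Real.log (gstar i j / P1 μ1 θ γ i j)
        = Real.log (gstar i j / γ i j) - (-θ) * Real.log u := fun j => by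
      rw [hP j, div_mul_eq_div_div,
        Real.log_div (div_pos (hgs i j) (hγ i j)).ne' hupos.ne', Real.log_rpow hu0]
    have hsum1 : (∑ j, gstar i j * (Real.log (gstar i j / P1 μ1 θ γ i j) - 1))
        = (∑ j, gstar i j * (Real.log (gstar i j / γ i j) - 1)) + θ * Real.log u * μ1 i := by
      rw [← hmarg i, Finset.mul_sum, ← Finset.sum_add_distrib]
      refine Finset.sum_congr rfl fun j _ => ?_
      rw [hlog j]; ring
    have hsum2 : (∑ j, P1 μ1 θ γ i j) = s * u ^ (-θ) := by
      rw [show (∑ j, P1 μ1 θ γ i j) = ∑ j, γ i j * u ^ (-θ) from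
        Finset.sum_congr rfl fun j _ => hP j, ← Finset.sum_mul, hsdef]
    rw [hsum1, hsum2, ← hsdef, ← hudef]
    have hseq : s = u * μ1 i := by
      rw [hudef, div_mul_cancel₀ _ (hμ1 i).ne']
    rw [phi, hseq]
    ring
  rw [KL, KL, ← Finset.sum_add_distrib, ← Finset.sum_add_distrib, ← Finset.sum_sub_distrib]
  exact Finset.sum_congr rfl fun i _ => row i

end AuxLemmas
theorem stmt_7 (n1 n2 : ℕ) (hn1 : 0 < n1) (hn2 : 0 < n2)
    (μ1 : Fin n1 → ℝ) (hμ1 : ∀ i, 0 < μ1 i)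
    (gstar : Matrix (Fin n1) (Fin n2) ℝ) (hgs : ∀ i j, 0 < gstar i j)
    (hmarg : ∀ i, ∑ j, gstar i j = μ1 i)
    (θ0 : ℝ) (hθ0 : θ0 ∈ Set.Ico (1 : ℝ) 2) (δ : ℝ) (hδ : 0 < δ) :
    ContinuousOn
      (fun γ : Matrix (Fin n1) (Fin n2) ℝ => Theta θ0 δ (fun i => (∑ j, γ i j) / μ1 i))
      {γ : Matrix (Fin n1) (Fin n2) ℝ | ∀ i j, 0 < γ i j} ∧
    ∀ γ : Matrix (Fin n1) (Fin n2) ℝ, (∀ i j, 0 < γ i j) →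
      KL gstar (P1 μ1 (Theta θ0 δ (fun i => (∑ j, γ i j) / μ1 i)) γ) ≤ KL gstar γ ∧
      (¬ (∀ i, ∑ j, γ i j = μ1 i) →
        KL gstar (P1 μ1 (Theta θ0 δ (fun i => (∑ j, γ i j) / μ1 i)) γ) < KL gstar γ) := by
  have hn1' : Nonempty (Fin n1) := Fin.pos_iff_nonempty.mp hn1
  have hn2' : Nonempty (Fin n2) := Fin.pos_iff_nonempty.mp hn2
  have huniv : (Finset.univ : Finset (Fin n1)).Nonempty := Finset.univ_nonempty
  have hrange : ∀ v : Fin n1 → ℝ, sInf (Set.range v) = Finset.univ.inf' huniv v := by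
    intro v
    rw [Finset.inf'_eq_csInf_image, Finset.coe_univ, Set.image_univ]
  have hinf_le : ∀ (v : Fin n1 → ℝ) (i : Fin n1), sInf (Set.range v) ≤ v i := by
    intro v i
    rw [hrange v]
    exact Finset.inf'_le _ (Finset.mem_univ i)
  have hinf_mem : ∀ v : Fin n1 → ℝ, ∃ i, sInf (Set.range v) = v i := by
    intro v
    rw [hrange v]
    obtain ⟨i, _, hi⟩ := Finset.exists_mem_eq_inf' huniv v
    exact ⟨i, hi⟩
  -- the min function and its properties
  have hMpos : ∀ γ : Matrix (Fin n1) (Fin n2) ℝ, (∀ i j, 0 < γ i j) →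
      0 < sInf (Set.range (fun i => (∑ j, γ i j) / μ1 i)) := by
    intro γ hγ
    obtain ⟨i, hi⟩ := hinf_mem (fun i => (∑ j, γ i j) / μ1 i)
    rw [hi]
    exact div_pos (Finset.sum_pos (fun j _ => hγ i j) Finset.univ_nonempty) (hμ1 i)
  constructor
  · -- continuity
    have hMcont : Continuous (fun γ : Matrix (Fin n1) (Fin n2) ℝ =>
        sInf (Set.range (fun i => (∑ j, γ i j) / μ1 i))) := by
      have : (fun γ : Matrix (Fin n1) (Fin n2) ℝ =>
          sInf (Set.range (fun i => (∑ j, γ i j) / μ1 i)))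
          = fun γ => Finset.univ.inf' huniv (fun i => (∑ j, γ i j) / μ1 i) := by
        funext γ
        exact hrange _
      rw [this]
      apply continuous_iff_continuousAt.2
      intro γ
      apply ContinuousAt.finset_inf'_apply huniv
      intro i _
      exact ((continuous_finset_sum Finset.univ fun j _ =>
        (continuous_apply j).comp (continuous_apply i)).div_const (μ1 i)).continuousAt
    have hGM : ContinuousOn
        (fun γ : Matrix (Fin n1) (Fin n2) ℝ =>
          Gfun (sInf (Set.range (fun i => (∑ j, γ i j) / μ1 i))))
        {γ : Matrix (Fin n1) (Fin n2) ℝ | ∀ i j, 0 < γ i j} := by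
      apply ContinuousOn.comp (t := Set.Ioi (0:ℝ))
        (fun m hm => (Gfun_continuousAt hm).continuousWithinAt) hMcont.continuousOn
      intro γ hγ
      exact Set.mem_Ioi.2 (hMpos γ hγ)
    have heq : (fun γ : Matrix (Fin n1) (Fin n2) ℝ =>
        Theta θ0 δ (fun i => (∑ j, γ i j) / μ1 i))
        = fun γ => min (max 1
            (Gfun (sInf (Set.range (fun i => (∑ j, γ i j) / μ1 i))) - δ)) θ0 := rfl
    rw [heq]
    have h1 : ContinuousOn
        (fun γ : Matrix (Fin n1) (Fin n2) ℝ =>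
          max 1 (Gfun (sInf (Set.range (fun i => (∑ j, γ i j) / μ1 i))) - δ))
        {γ : Matrix (Fin n1) (Fin n2) ℝ | ∀ i j, 0 < γ i j} :=
      ContinuousOn.sup continuousOn_const (hGM.sub continuousOn_const)
    exact ContinuousOn.inf h1 continuousOn_const
  · -- the descent inequality
    intro γ hγ
    have hsum : ∀ i, 0 < ∑ j, γ i j :=
      fun i => Finset.sum_pos (fun j _ => hγ i j) Finset.univ_nonempty
    obtain ⟨θ, hθdef⟩ : ∃ t, t = Theta θ0 δ (fun i => (∑ j, γ i j) / μ1 i) := ⟨_, rfl⟩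
    have hθ1 : 1 ≤ θ := by
      rw [hθdef, Theta]
      exact le_min (le_max_left _ _) hθ0.1
    have hθ2 : θ < 2 := by
      rw [hθdef, Theta]
      exact lt_of_le_of_lt (min_le_right _ _) hθ0.2
    obtain ⟨m, hmdef⟩ : ∃ t, t = sInf (Set.range (fun i => (∑ j, γ i j) / μ1 i)) := ⟨_, rfl⟩
    have hm0 : 0 < m := hmdef ▸ hMpos γ hγ
    have hmle : ∀ i, m ≤ (∑ j, γ i j) / μ1 i := fun i => hmdef ▸ hinf_le _ i
    have hGm : ThetaStar (fun i => (∑ j, γ i j) / μ1 i) = Gfun m := by rw [hmdef]; rfl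
    have key : ∀ i, 0 ≤ phi θ ((∑ j, γ i j) / μ1 i) ∧
        ((∑ j, γ i j) / μ1 i ≠ 1 → 0 < phi θ ((∑ j, γ i j) / μ1 i)) := by
      intro i
      obtain ⟨x, hxdef⟩ : ∃ t, t = (∑ j, γ i j) / μ1 i := ⟨_, rfl⟩
      rw [← hxdef]
      have hx0 : 0 < x := hxdef ▸ div_pos (hsum i) (hμ1 i)
      rcases lt_trichotomy x 1 with hx1 | hx1 | hx1
      · have hpos : 0 < phi θ x := by
          rcases eq_or_lt_of_le hθ1 with he | hlt
          · exact he ▸ phi_one_pos hx0 (ne_of_lt hx1)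
          · have hθG : θ < Gfun m := by
              have hmax : θ ≤ max 1 (ThetaStar (fun i => (∑ j, γ i j) / μ1 i) - δ) := by
                rw [hθdef, Theta]; exact min_le_left _ _
              rcases le_total (ThetaStar (fun i => (∑ j, γ i j) / μ1 i) - δ) 1 with h | h
              · rw [max_eq_left h] at hmax; linarith
              · rw [max_eq_right h] at hmax
                rw [← hGm]
                linarith
            have hm1 : m < 1 := lt_of_le_of_lt (hxdef ▸ hmle i) hx1
            have hphim : 0 < phi θ m :=
              phi_pos_of_lt_Gfun hm0 (ne_of_lt hm1) hθ1 hθG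
            exact phi_pos_between hθ1 hθ2 hm0 (hxdef ▸ hmle i) hx1 hphim
        exact ⟨hpos.le, fun _ => hpos⟩
      · constructor
        · rw [hx1, phi_at_one]
        · intro h; exact absurd hx1 h
      · exact ⟨(phi_pos_of_one_lt_x hθ1 hθ2 hx1).le,
          fun _ => phi_pos_of_one_lt_x hθ1 hθ2 hx1⟩
    have hKL := KL_P1_eq hn2 μ1 hμ1 gstar γ hgs hmarg hγ θ
    rw [← hθdef]
    constructor
    · rw [hKL]
      have : 0 ≤ ∑ i, μ1 i * phi θ ((∑ j, γ i j) / μ1 i) :=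
        Finset.sum_nonneg fun i _ => mul_nonneg (hμ1 i).le (key i).1
      linarith
    · intro hne
      push_neg at hne
      obtain ⟨i0, hi0⟩ := hne
      have hu0 : (∑ j, γ i0 j) / μ1 i0 ≠ 1 := by
        intro h
        exact hi0 ((div_eq_one_iff_eq (hμ1 i0).ne').mp h)
      rw [hKL]
      have : 0 < ∑ i, μ1 i * phi θ ((∑ j, γ i j) / μ1 i) :=
        Finset.sum_pos' (fun i _ => mul_nonneg (hμ1 i).le (key i).1)
          ⟨i0, Finset.mem_univ i0, mul_pos (hμ1 i0) ((key i0).2 hu0)⟩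
      linarith
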